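/- Let k ≥ 1 be an integer and let 0 < s_y < R. With u(s) = arccosh(cosh(s − s_y)·cosh(R)/cosh(s)) and F(s) = sinh(u(s))^{k−1}·u′(s)·cosh(s − s_y)², for every s ∈ (−R, R) one has F′(s) = sinh(u(s))^{k−4}·cosh(u(s))·sinh(s_y)²·(k·cosh(u(s))² − 2)/cosh(s)². -/

import Mathlib

/-- The inverse hyperbolic cosine, `arcosh x = log (x + √(x² - 1))`. -/
noncomputable def arcosh (x : ℝ) : ℝ := Real.log (x + Real.sqrt (x ^ 2 - 1))

lemma cosh_arcosh' {x : ℝ} (hx : 1 ≤ x) : Real.cosh (arcosh x) = x := by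
  have h1 : (0:ℝ) ≤ x ^ 2 - 1 := by nlinarith
  have hs : Real.sqrt (x ^ 2 - 1) ^ 2 = x ^ 2 - 1 := Real.sq_sqrt h1
  have hs0 : 0 ≤ Real.sqrt (x ^ 2 - 1) := Real.sqrt_nonneg _
  have hy : 0 < x + Real.sqrt (x ^ 2 - 1) := by nlinarith
  rw [arcosh, Real.cosh_eq, Real.exp_neg, Real.exp_log hy]
  field_simp
  nlinarith [hs]

lemma sinh_arcosh' {x : ℝ} (hx : 1 ≤ x) :
    Real.sinh (arcosh x) = Real.sqrt (x ^ 2 - 1) := by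
  have h1 : (0:ℝ) ≤ x ^ 2 - 1 := by nlinarith
  have hs : Real.sqrt (x ^ 2 - 1) ^ 2 = x ^ 2 - 1 := Real.sq_sqrt h1
  have hs0 : 0 ≤ Real.sqrt (x ^ 2 - 1) := Real.sqrt_nonneg _
  have hy : 0 < x + Real.sqrt (x ^ 2 - 1) := by nlinarith
  rw [arcosh, Real.sinh_eq, Real.exp_neg, Real.exp_log hy]
  field_simp
  nlinarith [hs]

lemma hasDerivAt_arcosh' {x : ℝ} (hx : 1 < x) :
    HasDerivAt arcosh (1 / Real.sqrt (x ^ 2 - 1)) x := by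
  have h1 : (0:ℝ) < x ^ 2 - 1 := by nlinarith
  have hv : 0 < Real.sqrt (x ^ 2 - 1) := Real.sqrt_pos.2 h1
  have hsq : Real.sqrt (x ^ 2 - 1) ^ 2 = x ^ 2 - 1 := Real.sq_sqrt h1.le
  have hy : 0 < x + Real.sqrt (x ^ 2 - 1) := by positivity
  have h2 : HasDerivAt (fun t : ℝ => t ^ 2 - 1) (2 * x) x := by
    simpa using (hasDerivAt_pow 2 x).sub_const 1
  have h3 : HasDerivAt (fun t : ℝ => Real.sqrt (t ^ 2 - 1))
      (2 * x / (2 * Real.sqrt (x ^ 2 - 1))) x := h2.sqrt h1.ne'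
  have h4 : HasDerivAt (fun t : ℝ => t + Real.sqrt (t ^ 2 - 1))
      (1 + 2 * x / (2 * Real.sqrt (x ^ 2 - 1))) x := (hasDerivAt_id x).add h3
  have h5 := h4.log hy.ne'
  have : (1 + 2 * x / (2 * Real.sqrt (x ^ 2 - 1))) / (x + Real.sqrt (x ^ 2 - 1))
      = 1 / Real.sqrt (x ^ 2 - 1) := by
    field_simp
    ring
  rw [this] at h5
  exact h5.congr_deriv rfl |>.congr_of_eventuallyEq (by filter_upwards with t; rfl)

theorem stmt_5 (k : ℕ) (hk : 1 ≤ k) (sy R : ℝ) (hsy : 0 < sy) (hR : sy < R)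
    (u F : ℝ → ℝ)
    (hu : ∀ s : ℝ, u s = arcosh (Real.cosh (s - sy) * Real.cosh R / Real.cosh s))
    (hF : ∀ s : ℝ, F s = Real.sinh (u s) ^ ((k : ℤ) - 1) * deriv u s * Real.cosh (s - sy) ^ 2) :
    ∀ s ∈ Set.Ioo (-R) R,
      deriv F s = Real.sinh (u s) ^ ((k : ℤ) - 4) * Real.cosh (u s) * Real.sinh sy ^ 2 *
        ((k : ℝ) * Real.cosh (u s) ^ 2 - 2) / Real.cosh s ^ 2 := by

  intro s hs
  obtain ⟨hs1, hs2⟩ := hs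
  have hc : (0:ℝ) < Real.cosh R := Real.cosh_pos R
  have hsh : 0 < Real.sinh sy := Real.sinh_pos_iff.2 hsy
  set c : ℝ := Real.cosh R with hcdef
  set g : ℝ → ℝ := fun t => Real.cosh (t - sy) * c / Real.cosh t with hgdef
  -- key inequality: g t > 1 for t < R
  have key : ∀ t : ℝ, t < R → 1 < g t := by
    intro t ht
    have hct : (0:ℝ) < Real.cosh t := Real.cosh_pos t
    have hid : Real.cosh (t - sy) * c =
        Real.cosh t * Real.cosh (R - sy) + Real.sinh (R - t) * Real.sinh sy := by
      rw [hcdef, Real.cosh_sub, Real.cosh_sub, Real.sinh_sub]; ring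
    have h1 : 1 < Real.cosh (R - sy) := Real.one_lt_cosh.2 (by linarith)
    have h2 : 0 < Real.sinh (R - t) := Real.sinh_pos_iff.2 (by linarith)
    rw [hgdef]
    rw [lt_div_iff₀ hct, hid]
    nlinarith
  have hgs : 1 < g s := key s hs2
  -- derivative of g
  have hgd : ∀ t : ℝ, HasDerivAt g (-(c * Real.sinh sy) / Real.cosh t ^ 2) t := by
    intro t
    have hct : Real.cosh t ≠ 0 := (Real.cosh_pos t).ne'
    have h1 : HasDerivAt (fun x : ℝ => Real.cosh (x - sy)) (Real.sinh (t - sy)) t := by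
      simpa [Function.comp_def] using (Real.hasDerivAt_cosh (t - sy)).comp t ((hasDerivAt_id t).sub_const sy)
    have h2 : HasDerivAt (fun x : ℝ => Real.cosh (x - sy) * c) (Real.sinh (t - sy) * c) t :=
      h1.mul_const c
    have h3 := h2.div (Real.hasDerivAt_cosh t) hct
    refine h3.congr_deriv ?_
    have hnum : Real.sinh (t - sy) * Real.cosh t - Real.cosh (t - sy) * Real.sinh t
        = -Real.sinh sy := by
      rw [Real.sinh_sub, Real.cosh_sub]
      linear_combination (-Real.sinh sy) * Real.cosh_sq_sub_sinh_sq t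
    congr 1
    linear_combination c * hnum
  -- sinh/cosh of u
  have huv : ∀ t : ℝ, t < R → Real.cosh (u t) = g t := fun t ht => by
    rw [hu t]; exact cosh_arcosh' (key t ht).le
  have husinh : ∀ t : ℝ, t < R → Real.sinh (u t) = Real.sqrt ((g t) ^ 2 - 1) := fun t ht => by
    rw [hu t]; exact sinh_arcosh' (key t ht).le
  -- derivative of u
  have hud : ∀ t : ℝ, t < R →
      HasDerivAt u (-(c * Real.sinh sy) / Real.cosh t ^ 2 / Real.sqrt ((g t) ^ 2 - 1)) t := by
    intro t ht
    have h1 := (hasDerivAt_arcosh' (key t ht)).comp t (hgd t)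
    have : u = fun x => arcosh (g x) := by funext x; rw [hu x]
    rw [this]
    refine h1.congr_deriv ?_
    ring
  -- the simplified function G
  set m : ℤ := (k : ℤ) - 2 with hmdef
  set G : ℝ → ℝ := fun t =>
    (-(Real.sinh sy) / c) * (Real.sqrt ((g t) ^ 2 - 1) ^ m * (g t) ^ 2) with hGdef
  -- F = G on a neighborhood of s
  have hFG : ∀ t ∈ Set.Ioo (-R) R, F t = G t := by
    intro t ⟨ht1, ht2⟩
    have hgt := key t ht2
    have hv : 0 < Real.sqrt ((g t) ^ 2 - 1) := Real.sqrt_pos.2 (by nlinarith)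
    set v := Real.sqrt ((g t) ^ 2 - 1) with hvdef
    have hct : (0:ℝ) < Real.cosh t := Real.cosh_pos t
    have hcosh : Real.cosh (t - sy) = g t * Real.cosh t / c := by
      rw [hgdef]; field_simp
    rw [hF t, (hud t ht2).deriv, husinh t ht2, hcosh, ← hvdef]
    have e1 : v ^ ((k:ℤ) - 1) = v ^ m * v := by
      rw [hmdef, ← zpow_add_one₀ hv.ne']; congr 1; ring
    rw [e1, hGdef]
    field_simp
    ring
  have hev : F =ᶠ[nhds s] G := by
    filter_upwards [isOpen_Ioo.mem_nhds ⟨hs1, hs2⟩] with t ht using hFG t ht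
  rw [hev.deriv_eq]
  -- derivative of G at s
  have hv : 0 < Real.sqrt ((g s) ^ 2 - 1) := Real.sqrt_pos.2 (by nlinarith)
  set v := Real.sqrt ((g s) ^ 2 - 1) with hvdef
  have hct : (0:ℝ) < Real.cosh s := Real.cosh_pos s
  have hvsq : v ^ 2 = (g s) ^ 2 - 1 := Real.sq_sqrt (by nlinarith)
  set g' : ℝ := -(c * Real.sinh sy) / Real.cosh s ^ 2 with hg'def
  have hd1 : HasDerivAt (fun t : ℝ => (g t) ^ 2 - 1) (2 * g s * g') s := by
    simpa [mul_comm, mul_assoc] using ((hgd s).pow 2).sub_const 1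
  have hd2 : HasDerivAt (fun t : ℝ => Real.sqrt ((g t) ^ 2 - 1))
      (2 * g s * g' / (2 * v)) s := hd1.sqrt (by nlinarith)
  have hd3 : HasDerivAt (fun t : ℝ => Real.sqrt ((g t) ^ 2 - 1) ^ m)
      ((m : ℝ) * v ^ (m - 1) * (2 * g s * g' / (2 * v))) s := by
    have := (hasDerivAt_zpow m v (Or.inl hv.ne')).comp s hd2
    exact this
  have hd4 : HasDerivAt (fun t : ℝ => (g t) ^ 2) (2 * g s * g') s := by
    simpa [mul_comm, mul_assoc] using (hgd s).fun_pow 2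
  have hd5 : HasDerivAt G
      ((-(Real.sinh sy) / c) *
        ((m : ℝ) * v ^ (m - 1) * (2 * g s * g' / (2 * v)) * (g s) ^ 2
          + v ^ m * (2 * g s * g'))) s := by
    rw [hGdef]
    exact ((hd3.mul hd4).const_mul _)
  rw [hd5.deriv, husinh s hs2, huv s hs2, ← hvdef]
  -- final algebra
  have e1 : v ^ (m - 1) = v ^ ((k:ℤ) - 4) * v ^ 2 * v⁻¹ := by
    rw [← zpow_natCast v 2, ← zpow_add₀ hv.ne', ← zpow_sub_one₀ hv.ne']
    congr 1
    rw [hmdef]; ring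
  have e2 : v ^ m = v ^ ((k:ℤ) - 4) * v ^ 2 := by
    rw [← zpow_natCast v 2, ← zpow_add₀ hv.ne']
    congr 1
    rw [hmdef]; ring
  rw [e1, e2, hg'def]
  have hmr : (m : ℝ) = (k : ℝ) - 2 := by rw [hmdef]; push_cast; ring
  rw [hmr]
  set w : ℝ := v ^ ((k:ℤ) - 4) with hwdef
  have hci : c * c⁻¹ = 1 := mul_inv_cancel₀ hc.ne'
  have hvi : v * v⁻¹ = 1 := mul_inv_cancel₀ hv.ne'
  linear_combination
    (Real.sinh sy ^ 2 * (Real.cosh s ^ 2)⁻¹ * w * g s) *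
        (((k:ℝ) - 2) * g s ^ 2 * v ^ 2 * v⁻¹ ^ 2 + 2 * v ^ 2) * hci
      + (Real.sinh sy ^ 2 * (Real.cosh s ^ 2)⁻¹ * w * g s) * ((k:ℝ) - 2) * g s ^ 2 *
        (v * v⁻¹ + 1) * hvi
      + 2 * (Real.sinh sy ^ 2 * (Real.cosh s ^ 2)⁻¹ * w * g s) * hvsq
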